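/- arXiv:2603.18709 — 3 statements merged into one kernel-verified Lean document; each statement's English description precedes it below -/
import Mathlib

section
/- If a finite relational structure (database) D satisfies a tuple-generating dependency T, then the core of D also satisfies T. -/
/-- A relational instance over schema `σ` with domain `α`: a set of facts. -/
abbrev Inst (σ α : Type) := Set (σ × List α)

/-- `h` is a homomorphism from instance `D` to instance `E`. -/
def IsHom {σ α β : Type} (D : Inst σ α) (E : Inst σ β) (h : α → β) : Prop :=
  ∀ R as, (R, as) ∈ D → (R, as.map h) ∈ E

/-- The active domain of an instance. -/
def activeDom {σ α : Type} (D : Inst σ α) : Set α :=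
  {a | ∃ R as, (R, as) ∈ D ∧ a ∈ as}

/-- Variables occurring in a set of atoms (atoms use natural numbers as variables). -/
def varsOf {σ : Type} (S : Set (σ × List ℕ)) : Set ℕ :=
  {x | ∃ R as, (R, as) ∈ S ∧ x ∈ as}

/-- A tuple-generating dependency: body and head are sets of relational atoms. -/
structure TGD (σ : Type) where
  body : Set (σ × List ℕ)
  head : Set (σ × List ℕ)

/-- Frontier variables: variables shared by body and head. -/
def TGD.frontier {σ : Type} (t : TGD σ) : Set ℕ := varsOf t.body ∩ varsOf t.head

/-- `D` satisfies the TGD `t`. -/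
def Satisfies {σ α : Type} (D : Inst σ α) (t : TGD σ) : Prop :=
  ∀ h : ℕ → α, IsHom t.body D h →
    ∃ g : ℕ → α, (∀ x ∈ t.frontier, g x = h x) ∧ IsHom t.head D g

/-- A conjunctive query: a set of atoms and a list of answer variables. -/
structure CQ (σ : Type) where
  atoms : Set (σ × List ℕ)
  ansVars : List ℕ

/-- The set of answers to a CQ on an instance. -/
def CQ.Ans {σ α : Type} (q : CQ σ) (D : Inst σ α) : Set (List α) :=
  {c | ∃ h : ℕ → α, IsHom q.atoms D h ∧ q.ansVars.map h = c}

/-- If a finite database `D` satisfies a TGD `t`, then so does its core `C`.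
Here `C` is a core of `D`: a sub-instance homomorphically equivalent to `D`
all of whose endomorphisms are injective on the active domain. -/
theorem stmt0 {σ α : Type} (D C : Inst σ α) (t : TGD σ)
    (hDfin : D.Finite)
    (hsub : C ⊆ D)
    (hret : ∃ r : α → α, IsHom D C r)
    (hcore : ∀ f : α → α, IsHom C C f → Set.InjOn f (activeDom C))
    (hD : Satisfies D t) : Satisfies C t := by
  intro h hhom
  obtain ⟨r, hr⟩ := hret
  have hhomD : IsHom t.body D h := fun R as hm => hsub (hhom R as hm)
  obtain ⟨g, hgfr, hghom⟩ := hD h hhomD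
  have hrC : IsHom C C r := fun R as hm => hr R as (hsub hm)
  have hiter : ∀ k, IsHom C C (r^[k]) := by
    intro k
    induction k with
    | zero => intro R as hm; simpa using hm
    | succ k ih =>
      intro R as hm
      have h2 := hrC R _ (ih R as hm)
      rw [List.map_map] at h2
      rw [Function.iterate_succ']
      exact h2
  have hSfin : (activeDom C).Finite := by
    have hss : activeDom C ⊆ ⋃ p ∈ D, {a | a ∈ p.2} := by
      rintro a ⟨R, as, hmem, ha⟩
      exact Set.mem_biUnion (hsub hmem) ha
    exact ((hDfin.biUnion (fun p _ => p.2.finite_toSet)).subset hss)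
  have hmaps : Set.MapsTo r (activeDom C) (activeDom C) := by
    rintro a ⟨R, as, hmem, ha⟩
    exact ⟨R, as.map r, hrC R as hmem, List.mem_map_of_mem (f := r) ha⟩
  have hinj : Set.InjOn r (activeDom C) := hcore r hrC
  have hbij : Set.BijOn r (activeDom C) (activeDom C) :=
    (hSfin.injOn_iff_bijOn_of_mapsTo hmaps).mp hinj
  haveI := hSfin.to_subtype
  set π : (activeDom C) ≃ (activeDom C) := Set.BijOn.equiv r hbij with hπ
  have hpow : ∀ (k : ℕ) (a : activeDom C), ((π ^ k) a : α) = r^[k] (a : α) := by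
    intro k
    induction k with
    | zero => intro a; simp
    | succ k ih =>
      intro a
      have h1 : ((π ^ (k+1)) a : α) = ((π ^ k) (π a) : α) := by
        rw [pow_succ]; rfl
      rw [h1, ih, Function.iterate_succ_apply]
      rfl
  set n := orderOf π with hn
  have hnpos : 0 < n := orderOf_pos π
  refine ⟨fun x => r^[n] (g x), ?_, ?_⟩
  · intro x hx
    have hxb : x ∈ varsOf t.body := hx.1
    obtain ⟨R, as, hmem, hxa⟩ := hxb
    have hxS : h x ∈ activeDom C :=
      ⟨R, as.map h, hhom R as hmem, List.mem_map_of_mem (f := h) hxa⟩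
    simp only [hgfr x hx]
    have := hpow n ⟨h x, hxS⟩
    rw [← this, hn, pow_orderOf_eq_one]
    rfl
  · obtain ⟨m, hm⟩ : ∃ m, n = m + 1 := ⟨n - 1, (Nat.succ_pred_eq_of_pos hnpos).symm⟩
    intro R as hmem
    have h1 : (R, as.map (fun a => r (g a))) ∈ C := by
      have := hr R _ (hghom R as hmem)
      simpa [List.map_map, Function.comp_def] using this
    have h2 := hiter m R _ h1
    rw [hm]
    have : as.map (fun a => r^[m+1] (g a)) = (as.map (fun a => r (g a))).map (r^[m]) := by
      simp [List.map_map, Function.comp, Function.iterate_succ_apply]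
    rw [this]
    exact h2
end

section
/- Satisfaction of TGDs is preserved under cloning of domain elements: if D satisfies a TGD T, and D' is obtained from D by duplicating a domain element a into two elements a₁, a₂ (each fact mentioning a is replaced by all facts obtained by replacing occurrences of a independently by a₁ or a₂), then D' satisfies T. -/
/-- The projection collapsing the two clones `Sum.inr true`, `Sum.inr false`
of the element `a` back to `a`. -/
def unclone {α : Type} (a : α) : α ⊕ Bool → α
  | Sum.inl b => b
  | Sum.inr _ => a

/-- The instance obtained from `D` by duplicating the element `a` into two
clones: the new domain is `(α \ {a}) ⊕ {a₁, a₂}`, and a fact is present iff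
collapsing the clones back to `a` yields a fact of `D`. -/
def cloneInst {σ α : Type} (D : Inst σ α) (a : α) : Inst σ (α ⊕ Bool) :=
  {f | (f.1, f.2.map (unclone a)) ∈ D ∧ Sum.inl a ∉ f.2}

/-- Satisfaction of TGDs is preserved under cloning a domain element. -/
theorem stmt5 {σ α : Type} (D : Inst σ α) (a : α) (t : TGD σ)
    (hD : Satisfies D t) : Satisfies (cloneInst D a) t := by
  classical
  intro h hh
  -- collapse h
  set h' : ℕ → α := fun x => unclone a (h x) with hh'
  have hhom : IsHom t.body D h' := by
    intro R as hR
    have := hh R as hR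
    have := this.1
    simp only [List.map_map] at this
    exact this
  obtain ⟨g', hfr, hg'⟩ := hD h' hhom
  -- h never maps body variables to Sum.inl a
  have hnota : ∀ x ∈ varsOf t.body, h x ≠ Sum.inl a := by
    rintro x ⟨R, as, hR, hx⟩ heq
    have := (hh R as hR).2
    exact this (heq ▸ List.mem_map_of_mem (f := h) hx)
  set lift : α → α ⊕ Bool := fun b => if b = a then Sum.inr true else Sum.inl b with hlift
  set g : ℕ → α ⊕ Bool := fun x => if x ∈ t.frontier then h x else lift (g' x) with hg
  have hun : ∀ x ∈ varsOf t.head, unclone a (g x) = g' x := by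
    intro x hx
    by_cases hf : x ∈ t.frontier
    · simp only [hg, hf, if_pos]
      exact (hfr x hf).symm
    · simp only [hg, hf, if_neg, not_false_iff, hlift]
      by_cases hb : g' x = a
      · simp [hb, unclone]
      · simp [hb, unclone]
  have hnoA : ∀ x ∈ varsOf t.head, g x ≠ Sum.inl a := by
    intro x hx
    by_cases hf : x ∈ t.frontier
    · simp only [hg, hf, if_pos]
      exact hnota x hf.1
    · simp only [hg, hf, if_neg, not_false_iff, hlift]
      by_cases hb : g' x = a
      · simp [hb]
      · simp [hb]
  refine ⟨g, ?_, ?_⟩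
  · intro x hx; simp [hg, hx]
  · intro R as hR
    constructor
    · have h1 : as.map (unclone a ∘ g) = as.map g' := by
        apply List.map_congr_left
        intro x hx
        exact hun x ⟨R, as, hR, hx⟩
      have := hg' R as hR
      simpa [List.map_map, h1] using this
    · intro hmem
      obtain ⟨x, hx, hxe⟩ := List.mem_map.mp hmem
      exact hnoA x ⟨R, as, hR, hx⟩ hxe
end

section
/- Tagging preserves and reflects query answers: let q(x̄) be a conjunctive query that is a core (as a structure with answer variables fixed), let q_sjf be its self-join-free version obtained by replacing each atom R(ȳ) with R_ȳ(ȳ) using a fresh relation symbol per atom, let D be a database over the schema of q_sjf, and let D_tag be the tagging of D with q, containing for each atom R_ȳ(ȳ) of q_sjf and each fact R_ȳ(c̄) ∈ D the fact R(ȳ ⊗ c̄) where ⊗ is componentwise pairing. Then c̄ ∈ q_sjf(D) if and only if x̄ ⊗ c̄ ∈ q(D_tag). -/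
lemma zip_self_map {α : Type*} (l : List ℕ) (h : ℕ → α) :
    l.map (fun x => (x, h x)) = l.zip (l.map h) := by
  induction l with | nil => rfl | cons a t ih => simp [ih]

lemma map_eq_self_mem {α : Type*} (l : List α) (f : α → α) (h : l.map f = l) :
    ∀ x ∈ l, f x = x := by
  induction l with | nil => simp | cons a t ih => simp_all

lemma map_injOn_eq {α β : Type*} {f : α → β} {s : Set α} (hf : Set.InjOn f s) :
    ∀ l l' : List α, (∀ x ∈ l, x ∈ s) → (∀ x ∈ l', x ∈ s) → l.map f = l'.map f → l = l' := by
  intro l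
  induction l with
  | nil => intro l' _ _ h; cases l' <;> simp_all
  | cons a t ih =>
    intro l' hl hl' h
    cases l' with
    | nil => simp at h
    | cons b t' =>
      simp only [List.map_cons, List.cons.injEq] at h
      have : a = b := hf (hl a (by simp)) (hl' b (by simp)) h.1
      subst this
      exact congrArg _ (ih t' (fun x hx => hl x (by simp [hx]))
        (fun x hx => hl' x (by simp [hx])) h.2)


/-- The tagging of a database `D` over the schema of `q_sjf` with the query
`q`: relation symbols of `q_sjf` are the atoms `(R, ȳ)` of `q`, and each fact
`R_ȳ(c̄) ∈ D` contributes the fact `R(ȳ ⊗ c̄)` with componentwise pairing. -/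
def Dtag {σ α : Type} (D : Inst (σ × List ℕ) α) : Inst σ (ℕ × α) :=
  {f | ∃ R ys cs, ((R, ys), cs) ∈ D ∧ f = (R, ys.zip cs)}

/-- Tagging preserves and reflects query answers (Lemma 5 of Carmeli et al.):
for a CQ `q` that is a core, `c̄ ∈ q_sjf(D)` iff `x̄ ⊗ c̄ ∈ q(D_tag)`. -/
theorem stmt9 {σ α : Type} (q : CQ σ) (D : Inst (σ × List ℕ) α)
    (hwf : ∀ R ys cs, ((R, ys), cs) ∈ D → (R, ys) ∈ q.atoms ∧ cs.length = ys.length)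
    (hans : ∀ x ∈ q.ansVars, x ∈ varsOf q.atoms)
    (hfin : q.atoms.Finite)
    (hcore : ∀ f : ℕ → ℕ, IsHom q.atoms q.atoms f → (∀ x ∈ q.ansVars, f x = x) →
      Set.BijOn f (varsOf q.atoms) (varsOf q.atoms)) :
    ∀ c : List α, c.length = q.ansVars.length →
      ((∃ h : ℕ → α, (∀ R ys, (R, ys) ∈ q.atoms → ((R, ys), ys.map h) ∈ D) ∧
          q.ansVars.map h = c) ↔
        (∃ h : ℕ → ℕ × α, IsHom q.atoms (Dtag D) h ∧
          q.ansVars.map h = q.ansVars.zip c)) := by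
  intro c hc
  constructor
  · rintro ⟨h, hD, hc'⟩
    refine ⟨fun x => (x, h x), ?_, ?_⟩
    · intro R ys hys
      exact ⟨R, ys, ys.map h, hD R ys hys, by rw [zip_self_map]⟩
    · rw [zip_self_map, hc']
  · rintro ⟨h, hhom, hansc⟩
    set f : ℕ → ℕ := fun x => (h x).1 with hf_def
    set g : ℕ → α := fun x => (h x).2 with hg_def
    have key : ∀ R ys, (R, ys) ∈ q.atoms →
        (R, ys.map f) ∈ q.atoms ∧ ((R, ys.map f), ys.map g) ∈ D := by
      intro R ys hys
      obtain ⟨R', ys', cs, hDm, heq⟩ := hhom R ys hys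
      obtain ⟨hR, hz⟩ := Prod.mk.injEq _ _ _ _ ▸ heq
      subst hR
      obtain ⟨hat, hlen⟩ := hwf R ys' cs hDm
      have hlen2 : ys'.length = ys.length := by
        have := congrArg List.length hz
        simp [List.length_zip, hlen] at this
        omega
      have hfst : ys.map f = ys' := by
        have : (ys.map h).map Prod.fst = (ys'.zip cs).map Prod.fst := by rw [hz]
        rwa [List.map_map, List.map_fst_zip (le_of_eq hlen.symm)] at this
      have hsnd : ys.map g = cs := by
        have : (ys.map h).map Prod.snd = (ys'.zip cs).map Prod.snd := by rw [hz]
        rwa [List.map_map, List.map_snd_zip (le_of_eq hlen)] at this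
      rw [hfst, hsnd]
      exact ⟨hat, hDm⟩
    have hfhom : IsHom q.atoms q.atoms f := fun R ys hys => (key R ys hys).1
    have hglen : c.length = q.ansVars.length := hc
    have hmapf : q.ansVars.map f = q.ansVars := by
      have : (q.ansVars.map h).map Prod.fst = (q.ansVars.zip c).map Prod.fst := by rw [hansc]
      rwa [List.map_map, List.map_fst_zip (le_of_eq hc.symm)] at this
    have hmapg : q.ansVars.map g = c := by
      have : (q.ansVars.map h).map Prod.snd = (q.ansVars.zip c).map Prod.snd := by rw [hansc]
      rwa [List.map_map, List.map_snd_zip (le_of_eq hc)] at this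
    have hfix : ∀ x ∈ q.ansVars, f x = x := map_eq_self_mem _ _ hmapf
    have hbij := hcore f hfhom hfix
    have hinj : Set.InjOn f (varsOf q.atoms) := hbij.injOn
    -- the induced map on atoms is bijective
    set F : σ × List ℕ → σ × List ℕ := fun a => (a.1, a.2.map f) with hF_def
    have hmaps : Set.MapsTo F q.atoms q.atoms := by
      rintro ⟨R, ys⟩ hys; exact (key R ys hys).1
    have hvarsmem : ∀ R ys, (R, ys) ∈ q.atoms → ∀ x ∈ ys, x ∈ varsOf q.atoms :=
      fun R ys hys x hx => ⟨R, ys, hys, hx⟩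
    have hFinj : Set.InjOn F q.atoms := by
      rintro ⟨R, ys⟩ hys ⟨R', ys'⟩ hys' hEq
      obtain ⟨hR, hys2⟩ := Prod.mk.injEq _ _ _ _ ▸ hEq
      subst hR
      have := map_injOn_eq hinj ys ys' (hvarsmem _ _ hys) (hvarsmem _ _ hys') hys2
      rw [this]
    have hFsurj : Set.SurjOn F q.atoms q.atoms :=
      ((hfin.injOn_iff_bijOn_of_mapsTo hmaps).mp hFinj).surjOn
    set e : ℕ → ℕ := Function.invFunOn f (varsOf q.atoms) with he_def
    have hef : ∀ x ∈ varsOf q.atoms, e (f x) = x := fun x hx => hinj.leftInvOn_invFunOn hx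
    refine ⟨fun x => g (e x), ?_, ?_⟩
    · intro R ys hys
      obtain ⟨⟨R', zs⟩, hzs, hFz⟩ := hFsurj hys
      simp only [hF_def, Prod.mk.injEq] at hFz
      obtain ⟨hR, hmapz⟩ := hFz
      subst hR
      have hDmem := (key R' zs hzs).2
      rw [hmapz] at hDmem
      have : ys.map (fun x => g (e x)) = zs.map g := by
        rw [← hmapz, List.map_map]
        exact List.map_congr_left (fun z hz => by
          simp only [Function.comp]
          rw [hef z (hvarsmem _ _ hzs z hz)])
      rw [this]
      exact hDmem
    · rw [← hmapg]
      refine List.map_congr_left (fun x hx => ?_)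
      have hx1 := hef x (hans x hx)
      rw [hfix x hx] at hx1
      rw [hx1]
end
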